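/- Let p be a prime with p > 5 and let t ∈ 𝔽_p with t ≠ 2 and t ≠ −2. Then there exist A, B ∈ SL(2, 𝔽_p) with tr(A) = t, tr(B) = 0, tr(AB) = 0, such that the subgroup of PSL₂(𝔽_p) generated by the images of A and B is isomorphic to a dihedral group D_n for some n ≥ 1. -/
import Mathlib

open DihedralGroup in
lemma dihedral_of_invols {Q : Type*} [Group Q] [Finite Q] (a s : Q)
    (hs2 : s * s = 1) (has2 : (a*s) * (a*s) = 1) (hs1 : s ≠ 1) (hsa : s ≠ a) :
    ∃ n : ℕ, 1 ≤ n ∧ Nonempty (↥(Subgroup.closure {a, s}) ≃* DihedralGroup n) := by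
  have hord := orderOf_pos a
  set n := orderOf a with hn
  haveI : NeZero n := ⟨by omega⟩
  have hsinv : s⁻¹ = s := by rw [inv_eq_iff_mul_eq_one]; exact hs2
  have hrel : s * a * s = a⁻¹ := by
    have h1 : a * s * a = s⁻¹ := by
      rw [eq_inv_iff_mul_eq_one]
      exact (mul_assoc _ _ _).trans has2
    calc s * a * s = s * (a * s * a) * a⁻¹ := by group
    _ = s * s⁻¹ * a⁻¹ := by rw [h1]
    _ = a⁻¹ := by group
  have hconj : ∀ m : ℤ, s * a ^ m * s = a ^ (-m) := by
    intro m
    have : s * a ^ m * s = (s * a * s⁻¹) ^ m := by rw [conj_zpow, hsinv]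
    rw [this, hsinv, hrel, inv_zpow, zpow_neg]
  have hval : ∀ (x : ZMod n) (k : ℤ), (k : ZMod n) = x → a ^ k = a ^ ((x.val : ℤ)) := by
    intro x k hk
    rw [zpow_eq_zpow_iff_modEq, ← hn]
    have : (((x.val : ℤ)) : ZMod n) = (k : ZMod n) := by
      rw [hk]; push_cast; rw [ZMod.natCast_val, ZMod.cast_id]
    exact (ZMod.intCast_eq_intCast_iff' _ _ _).mp this.symm
  classical
  let f : DihedralGroup n → Q := fun x =>
    match x with
    | .r i => a ^ (i.val : ℤ)
    | .sr i => s * a ^ (i.val : ℤ)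
  have hvv : ∀ i j : ZMod n, a ^ (i.val : ℤ) * a ^ (j.val : ℤ) = a ^ (((i+j).val : ℤ)) := by
    intro i j
    rw [← zpow_add]
    apply hval
    push_cast
    rw [ZMod.natCast_val, ZMod.natCast_val, ZMod.cast_id, ZMod.cast_id]
  have hvs : ∀ i j : ZMod n, a ^ (i.val : ℤ) * (s * a ^ (j.val : ℤ)) = s * a ^ (((j - i).val : ℤ)) := by
    intro i j
    have h0 := hconj (-(i.val:ℤ))
    rw [neg_neg] at h0
    have h : a ^ (i.val:ℤ) * s = s * a ^ (-(i.val:ℤ)) := by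
      rw [← h0, mul_assoc, hs2, mul_one]
    rw [← mul_assoc, h, mul_assoc, ← zpow_add]
    congr 1
    apply hval
    push_cast
    rw [ZMod.natCast_val, ZMod.natCast_val, ZMod.cast_id, ZMod.cast_id]
    ring
  have hmap : ∀ x y : DihedralGroup n, f (x * y) = f x * f y := by
    rintro (i | i) (j | j)
    · exact (hvv i j).symm
    · exact (hvs i j).symm
    · show s * a ^ (((i+j).val:ℤ)) = s * a ^ (i.val:ℤ) * a ^ (j.val:ℤ)
      rw [mul_assoc, hvv]
    · show a ^ (((j-i).val:ℤ)) = s * a ^ (i.val:ℤ) * (s * a ^ (j.val:ℤ))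
      rw [mul_assoc, hvs, ← mul_assoc, hs2, one_mul]
  let φ : DihedralGroup n →* Q := MonoidHom.mk' f hmap
  have hra : φ (.r 1) = a := by
    show a ^ (((1 : ZMod n).val : ℤ)) = a
    rw [← hval (1 : ZMod n) 1 (by push_cast; ring), zpow_one]
  have hrs : φ (.sr 0) = s := by
    show s * a ^ (((0 : ZMod n).val : ℤ)) = s
    simp
  have hinj : Function.Injective φ := by
    rw [injective_iff_map_eq_one]
    rintro (i | i) h
    · have h' : a ^ (i.val : ℤ) = 1 := h
      rw [zpow_natCast] at h'
      have hdvd : n ∣ i.val := orderOf_dvd_of_pow_eq_one h'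
      have hi0 : i.val = 0 := Nat.eq_zero_of_dvd_of_lt hdvd (ZMod.val_lt i)
      have : i = 0 := (ZMod.val_eq_zero i).mp hi0
      rw [this]
      rfl
    · exfalso
      have h' : s * a ^ (i.val : ℤ) = 1 := h
      have hs_eq : s = (a ^ ((i.val:ℤ)))⁻¹ := by
        rw [eq_inv_iff_mul_eq_one]; exact h'
      rw [← zpow_neg] at hs_eq
      have hc : s * a = a * s := by
        rw [hs_eq]
        exact ((Commute.self_zpow a (-(i.val:ℤ))).eq).symm
      have hainv : a⁻¹ = a := by rw [← hrel, hc, mul_assoc, hs2, mul_one]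
      have ha2 : a * a = 1 := by
        calc a * a = a⁻¹ * a := by rw [hainv]
        _ = 1 := by group
      have h'' : s * a ^ (i.val : ℕ) = 1 := by rw [← zpow_natCast]; exact h'
      rcases Nat.even_or_odd i.val with ⟨k, hk⟩ | ⟨k, hk⟩
      · have hav : a ^ (i.val : ℕ) = 1 := by
          rw [hk, ← two_mul, pow_mul, pow_two, ha2, one_pow]
        rw [hav, mul_one] at h''
        exact hs1 h''
      · have hav : a ^ (i.val : ℕ) = a := by
          rw [hk, pow_succ, pow_mul, pow_two, ha2, one_pow, one_mul]
        rw [hav] at h''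
        have : s = a⁻¹ := by rw [eq_inv_iff_mul_eq_one]; exact h''
        rw [hainv] at this
        exact hsa this
  let e := MonoidHom.ofInjective hinj
  have heq : Subgroup.closure {a, s} = φ.range := by
    apply le_antisymm
    · rw [Subgroup.closure_le]
      rintro x (rfl | rfl)
      · exact ⟨.r 1, hra⟩
      · exact ⟨.sr 0, hrs⟩
    · rintro _ ⟨(i | i), rfl⟩
      · exact Subgroup.zpow_mem _ (Subgroup.subset_closure (by simp)) _
      · exact Subgroup.mul_mem _ (Subgroup.subset_closure (by simp))
          (Subgroup.zpow_mem _ (Subgroup.subset_closure (by simp)) _)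
  exact ⟨n, hord, ⟨(MulEquiv.subgroupCongr heq).trans e.symm⟩⟩

theorem dihedral_orbit_exists (p : ℕ) (hp : p.Prime) (hp5 : 5 < p) (t : ZMod p)
    (ht2 : t ≠ 2) (htm2 : t ≠ -2) :
    ∃ A B : Matrix.SpecialLinearGroup (Fin 2) (ZMod p),
      Matrix.trace (A : Matrix (Fin 2) (Fin 2) (ZMod p)) = t ∧
      Matrix.trace (B : Matrix (Fin 2) (Fin 2) (ZMod p)) = 0 ∧
      Matrix.trace ((A * B : Matrix.SpecialLinearGroup (Fin 2) (ZMod p)) :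
        Matrix (Fin 2) (Fin 2) (ZMod p)) = 0 ∧
      ∃ n : ℕ, 1 ≤ n ∧ Nonempty
        ((Subgroup.closure {(QuotientGroup.mk A :
            Matrix.SpecialLinearGroup (Fin 2) (ZMod p) ⧸
              Subgroup.center (Matrix.SpecialLinearGroup (Fin 2) (ZMod p))),
          QuotientGroup.mk B}) ≃* DihedralGroup n) := by
  haveI : Fact p.Prime := ⟨hp⟩
  have h2 : (2 : ZMod p) ≠ 0 := by
    intro h
    have h' : ((2:ℕ) : ZMod p) = 0 := by exact_mod_cast h
    have hd := (ZMod.natCast_eq_zero_iff 2 p).mp h'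
    have := Nat.le_of_dvd (by norm_num) hd
    omega
  obtain ⟨u, v, huv⟩ := ZMod.sq_add_sq p (t^2 * (4:ZMod p)⁻¹ - 1)
  have h4 : (4 : ZMod p) ≠ 0 := by
    have h44 : (4 : ZMod p) = 2 * 2 := by norm_num
    rw [h44]; exact mul_ne_zero h2 h2
  set x : ZMod p := t * 2⁻¹ + u with hx
  set w : ZMod p := t * 2⁻¹ - u with hw
  have huv' : 4 * (u^2 + v^2) = t^2 - 4 := by
    rw [huv]; field_simp
  have hdetA : Matrix.det !![x, v; v, w] = 1 := by
    rw [Matrix.det_fin_two_of, hx, hw]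
    field_simp
    linear_combination -huv'
  have hinv : ((2:ZMod p)⁻¹)^2 = (4:ZMod p)⁻¹ := by
    rw [sq, ← mul_inv]; norm_num
  have hdet' : x * w - v * v = 1 := by
    have := hdetA; rwa [Matrix.det_fin_two_of] at this
  set Am : Matrix (Fin 2) (Fin 2) (ZMod p) := !![x, v; v, w] with hAm
  set Bm : Matrix (Fin 2) (Fin 2) (ZMod p) := !![0, 1; -1, 0] with hBm
  have hdetB : Matrix.det Bm = 1 := by rw [hBm, Matrix.det_fin_two_of]; ring
  set A : Matrix.SpecialLinearGroup (Fin 2) (ZMod p) := ⟨Am, hdetA⟩ with hA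
  set B : Matrix.SpecialLinearGroup (Fin 2) (ZMod p) := ⟨Bm, hdetB⟩ with hB
  have hBB : Bm * Bm = -1 := by
    ext i j
    fin_cases i <;> fin_cases j <;>
      simp [hBm, Matrix.mul_apply, Fin.sum_univ_two, Matrix.one_fin_two]
  have hMM : (Am * Bm) * (Am * Bm) = -1 := by
    ext i j
    fin_cases i <;> fin_cases j <;>
      simp [hAm, hBm, Matrix.mul_apply, Fin.sum_univ_two, Matrix.one_fin_two] <;>
      first
      | ring1
      | linear_combination huv - t^2 * hinv
  have hABne : Am * Bm ≠ Bm * Am := by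
    intro hE
    have h00 := congrFun (congrFun hE 0) 0
    have h01 := congrFun (congrFun hE 0) 1
    simp [hAm, hBm, Matrix.mul_apply, Fin.sum_univ_two] at h00 h01
    -- h00 : -v = v, h01 : x = w
    have hv : v = 0 := by
      have h2v : 2 * v = 0 := by linear_combination - h00
      rcases mul_eq_zero.mp h2v with h | h
      · exact absurd h h2
      · exact h
    have hu : u = 0 := by
      rw [hx, hw] at h01
      have h2u : 2 * u = 0 := by linear_combination h01
      rcases mul_eq_zero.mp h2u with h | h
      · exact absurd h h2
      · exact h
    have ht4 : (t - 2) * (t + 2) = 0 := by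
      rw [hu, hv] at huv'
      linear_combination -huv'
    rcases mul_eq_zero.mp ht4 with h | h
    · exact ht2 (by linear_combination h)
    · exact htm2 (by linear_combination h)
  have hcenter : ∀ C : Matrix.SpecialLinearGroup (Fin 2) (ZMod p),
      (C : Matrix (Fin 2) (Fin 2) (ZMod p)) = -1 →
      C ∈ Subgroup.center (Matrix.SpecialLinearGroup (Fin 2) (ZMod p)) := by
    intro C hC
    refine Subgroup.mem_center_iff.mpr fun g => Subtype.ext ?_
    rw [Matrix.SpecialLinearGroup.coe_mul, Matrix.SpecialLinearGroup.coe_mul, hC,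
      mul_neg_one, neg_one_mul]
  have hABc : ((A * B : Matrix.SpecialLinearGroup (Fin 2) (ZMod p)) :
      Matrix (Fin 2) (Fin 2) (ZMod p)) = Am * Bm := rfl
  refine ⟨A, B, ?_, ?_, ?_, ?_⟩
  · show Matrix.trace Am = t
    rw [hAm, Matrix.trace_fin_two_of, hx, hw]
    field_simp
    ring
  · show Matrix.trace Bm = 0
    rw [hBm, Matrix.trace_fin_two_of]; ring
  · rw [hABc, hAm, hBm, Matrix.mul_fin_two, Matrix.trace_fin_two_of]; ring
  · -- group theory part
    have hs2 : (QuotientGroup.mk B : _ ⧸ Subgroup.center _) * QuotientGroup.mk B = 1 := by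
      rw [← QuotientGroup.mk_mul, QuotientGroup.eq_one_iff]
      exact hcenter _ hBB
    have has2 : ((QuotientGroup.mk A : _ ⧸ Subgroup.center _) * QuotientGroup.mk B) *
        ((QuotientGroup.mk A : _ ⧸ Subgroup.center _) * QuotientGroup.mk B) = 1 := by
      rw [← QuotientGroup.mk_mul, ← QuotientGroup.mk_mul, QuotientGroup.eq_one_iff]
      exact hcenter _ hMM
    have hs1 : (QuotientGroup.mk B : _ ⧸ Subgroup.center _) ≠ 1 := by
      intro h
      have hc := Subgroup.mem_center_iff.mp ((QuotientGroup.eq_one_iff B).mp h) A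
      exact hABne (congrArg Subtype.val hc)
    have hsa : (QuotientGroup.mk B : _ ⧸ Subgroup.center _) ≠ QuotientGroup.mk A := by
      intro h
      have hmem := QuotientGroup.eq.mp h
      have hc := Subgroup.mem_center_iff.mp hmem B
      -- hc : B * (B⁻¹ * A) = (B⁻¹ * A) * B
      rw [mul_inv_cancel_left] at hc
      -- hc : A = B⁻¹ * A * B
      have hcomm : Bm * Am = Am * Bm := by
        have : B * A = A * B := by
          calc B * A = B * (B⁻¹ * A * B) := by rw [← hc]
          _ = A * B := by group
        exact congrArg Subtype.val this
      exact hABne hcomm.symm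
    obtain ⟨n, hn1, hiso⟩ := dihedral_of_invols (QuotientGroup.mk A) (QuotientGroup.mk B)
      hs2 has2 hs1 hsa
    exact ⟨n, hn1, hiso⟩
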